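/- (Inequality (8.22) from the proof of Lemma 8.2) For every real a > 0 and every y ∈ ℝ, the complex Gamma function satisfies |Γ(a + i·y)| ≤ Γ(a) · a / √(a² + y²). -/

import Mathlib

open MeasureTheory Set

lemma norm_Gamma_le_Gamma_re (z : ℂ) (hz : 0 < z.re) :
    ‖Complex.Gamma z‖ ≤ Real.Gamma z.re := by
  rw [Complex.Gamma_eq_integral hz, Real.Gamma_eq_integral hz, Complex.GammaIntegral]
  calc ‖∫ x in Ioi (0:ℝ), (Real.exp (-x) : ℂ) * (x : ℂ) ^ (z - 1)‖
      ≤ ∫ x in Ioi (0:ℝ), ‖(Real.exp (-x) : ℂ) * (x : ℂ) ^ (z - 1)‖ :=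
        norm_integral_le_integral_norm _
    _ = ∫ x in Ioi (0:ℝ), Real.exp (-x) * x ^ (z.re - 1) := by
        refine setIntegral_congr_fun measurableSet_Ioi (fun x hx => ?_)
        rw [norm_mul, Complex.norm_real, Real.norm_of_nonneg (Real.exp_nonneg _),
          Complex.norm_cpow_eq_rpow_re_of_pos hx, Complex.sub_re,
          Complex.one_re]

/-- **Inequality (8.22).** For every `a > 0` and `y ∈ ℝ`, the complex Gamma function satisfies
`|Γ(a + iy)| ≤ Γ(a) · a / √(a² + y²)`. -/
theorem gamma_vertical_decay (a y : ℝ) (ha : 0 < a) :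
    ‖Complex.Gamma (a + y * Complex.I)‖ ≤
      Real.Gamma a * a / Real.sqrt (a ^ 2 + y ^ 2) := by
  set z : ℂ := a + y * Complex.I with hzdef
  have hre : z.re = a := by simp [hzdef]
  have hz0 : z ≠ 0 := by
    intro h
    have : z.re = 0 := by rw [h]; simp
    rw [hre] at this; exact ha.ne' this
  have hadd : Complex.Gamma (z + 1) = z * Complex.Gamma z := Complex.Gamma_add_one z hz0
  have hnorm : ‖Complex.Gamma (z + 1)‖ = ‖z‖ * ‖Complex.Gamma z‖ := by
    rw [hadd, norm_mul]
  have hzre1 : 0 < (z + 1).re := by simp [hre]; linarith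
  have h1 : ‖Complex.Gamma (z + 1)‖ ≤ Real.Gamma (a + 1) := by
    have := norm_Gamma_le_Gamma_re (z + 1) hzre1
    simpa [hre] using this
  have hG1 : Real.Gamma (a + 1) = a * Real.Gamma a := Real.Gamma_add_one ha.ne'
  have habs : ‖z‖ = Real.sqrt (a ^ 2 + y ^ 2) := by
    rw [hzdef, Complex.norm_add_mul_I]
  have hzpos : 0 < ‖z‖ := norm_pos_iff.mpr hz0
  have key : ‖z‖ * ‖Complex.Gamma z‖ ≤ a * Real.Gamma a := by
    rw [← hnorm]; rw [hG1] at h1; exact h1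
  rw [← habs]
  rw [div_eq_mul_inv]
  calc ‖Complex.Gamma z‖ = (‖z‖ * ‖Complex.Gamma z‖) * ‖z‖⁻¹ := by
        rw [mul_comm ‖z‖, mul_assoc, mul_inv_cancel₀ hzpos.ne', mul_one]
    _ ≤ (a * Real.Gamma a) * ‖z‖⁻¹ := by
        gcongr
    _ = Real.Gamma a * a * ‖z‖⁻¹ := by ring
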